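/- Let F be μ-strongly convex with F(x) ≥ 0, and suppose x_t approximately minimizes F_{λ_t,x_{t−1}} with multiplicative error ε_t ∈ (0,1). Then with r_t = ‖x_{t−1} − x*_{λ_t,x_{t−1}}‖₂ we have r_t − √(2ε_t F(x_{t−1})/(2λ_t+μ)) ≤ ‖x_t − x_{t−1}‖₂ ≤ √(2ε_t F(x_{t−1})/(2λ_t+μ)) + ‖∇F(x_{t−1})‖₂/(2λ_t+μ). -/
import Mathlib


open scoped RealInnerProductSpace

set_option maxHeartbeats 1000000 in
/-- Step-size bounds for the approximate proximal point method: if `x` is an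
ε-multiplicative approximate minimizer of `F_{λ,y}` with exact minimizer `xs`,
and `r = ‖y − xs‖`, then
`r − √(2ε F(y)/(2λ+μ)) ≤ ‖x − y‖ ≤ √(2ε F(y)/(2λ+μ)) + ‖∇F(y)‖/(2λ+μ)`. -/
theorem stmt_14 {d : ℕ} (F : EuclideanSpace ℝ (Fin d) → ℝ)
    (F' : EuclideanSpace ℝ (Fin d) → EuclideanSpace ℝ (Fin d))
    (hgrad : ∀ z, HasGradientAt F (F' z) z) (μ : ℝ) (hμ : 0 < μ)
    (hsc : ∀ a b : EuclideanSpace ℝ (Fin d),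
      F a + ⟪F' a, b - a⟫ + μ / 2 * ‖b - a‖ ^ 2 ≤ F b)
    (hFnn : ∀ z, 0 ≤ F z)
    (lam ε : ℝ) (hlam : 0 < lam) (hε : 0 < ε) (hε' : ε < 1)
    (y xs x : EuclideanSpace ℝ (Fin d))
    (hxs : IsMinOn (fun z => F z + lam * ‖z - y‖ ^ 2) Set.univ xs)
    (horacle : F x + lam * ‖x - y‖ ^ 2 ≤ (1 + ε) * (F xs + lam * ‖xs - y‖ ^ 2)) :
    ‖y - xs‖ - Real.sqrt (2 * ε * F y / (2 * lam + μ)) ≤ ‖x - y‖ ∧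
      ‖x - y‖ ≤ Real.sqrt (2 * ε * F y / (2 * lam + μ)) + ‖F' y‖ / (2 * lam + μ) := by
  classical
  set G : EuclideanSpace ℝ (Fin d) → ℝ := fun z => F z + lam * ‖z - y‖ ^ 2 with hGdef
  set v : EuclideanSpace ℝ (Fin d) := F' xs + (2 * lam) • (xs - y) with hvdef
  have h2lamμ : 0 < 2 * lam + μ := by linarith
  -- derivative of G at xs
  have hid : HasFDerivAt (fun z : EuclideanSpace ℝ (Fin d) => z - y) (ContinuousLinearMap.id ℝ (EuclideanSpace ℝ (Fin d))) xs :=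
    (hasFDerivAt_id xs).sub_const y
  have hinner := hid.inner ℝ hid
  have hq : HasFDerivAt (fun z : EuclideanSpace ℝ (Fin d) => lam * ‖z - y‖ ^ 2)
      (lam • ((fderivInnerCLM ℝ (xs - y, xs - y)).comp
        ((ContinuousLinearMap.id ℝ (EuclideanSpace ℝ (Fin d))).prod (ContinuousLinearMap.id ℝ (EuclideanSpace ℝ (Fin d)))))) xs := by
    have heq : (fun z : EuclideanSpace ℝ (Fin d) => lam * ‖z - y‖ ^ 2)
        = fun z : EuclideanSpace ℝ (Fin d) => lam * ⟪z - y, z - y⟫ := by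
      funext z; rw [real_inner_self_eq_norm_sq]
    rw [heq]
    exact hinner.const_mul lam
  have hGd : HasFDerivAt G
      ((InnerProductSpace.toDual ℝ (EuclideanSpace ℝ (Fin d)) (F' xs)) +
        lam • ((fderivInnerCLM ℝ (xs - y, xs - y)).comp
          ((ContinuousLinearMap.id ℝ (EuclideanSpace ℝ (Fin d))).prod (ContinuousLinearMap.id ℝ (EuclideanSpace ℝ (Fin d)))))) xs :=
    HasFDerivAt.add (hgrad xs) hq
  have hloc : IsLocalMin G xs := by
    refine Filter.Eventually.mono (Filter.univ_mem) ?_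
    intro z _
    exact hxs (Set.mem_univ z)
  have hD0 := hloc.hasFDerivAt_eq_zero hGd
  have hvw : ∀ w : EuclideanSpace ℝ (Fin d), ⟪v, w⟫ = 0 := by
    intro w
    have h := congrArg (fun L : EuclideanSpace ℝ (Fin d) →L[ℝ] ℝ => L w) hD0
    simp only [ContinuousLinearMap.add_apply, ContinuousLinearMap.smul_apply,
      ContinuousLinearMap.comp_apply, ContinuousLinearMap.prod_apply,
      ContinuousLinearMap.id_apply, fderivInnerCLM_apply,
      InnerProductSpace.toDual_apply_apply, ContinuousLinearMap.zero_apply, smul_eq_mul] at h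
    have hc : ⟪w, xs - y⟫ = ⟪xs - y, w⟫ := real_inner_comm _ _
    rw [hvdef, inner_add_left, real_inner_smul_left]
    rw [hc] at h
    linarith
  have hv0 : v = 0 := by
    have := hvw v
    rwa [real_inner_self_eq_norm_sq, pow_eq_zero_iff (two_ne_zero), norm_eq_zero] at this
  have hFxs : F' xs = -((2 * lam) • (xs - y)) := by
    rw [hvdef] at hv0
    exact eq_neg_of_add_eq_zero_left hv0
  -- quadratic growth of G around xs
  have hkey : ∀ b : EuclideanSpace ℝ (Fin d), G xs + (lam + μ / 2) * ‖b - xs‖ ^ 2 ≤ G b := by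
    intro b
    have h1 := hsc xs b
    have hbd : b - y = (xs - y) + (b - xs) := by abel
    have hnorm : ‖b - y‖ ^ 2 = ‖xs - y‖ ^ 2 + 2 * ⟪xs - y, b - xs⟫ + ‖b - xs‖ ^ 2 := by
      rw [hbd, @norm_add_sq_real]
    have hinner2 : ⟪F' xs, b - xs⟫ = -(2 * lam * ⟪xs - y, b - xs⟫) := by
      rw [hFxs, inner_neg_left, real_inner_smul_left]
    simp only [hGdef]
    rw [hnorm]
    nlinarith [h1, hinner2]
  -- G xs ≤ F y and G xs ≥ 0
  have hGxs_le : G xs ≤ F y := by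
    have := hxs (Set.mem_univ y)
    simpa [hGdef, sub_self, norm_zero] using this
  have hGxs_nn : 0 ≤ G xs := by
    have h1 := hFnn xs
    have h2 : 0 ≤ lam * ‖xs - y‖ ^ 2 := by positivity
    simp only [hGdef]
    linarith
  -- bound on ‖x - xs‖
  have hsq : ‖x - xs‖ ^ 2 ≤ 2 * ε * F y / (2 * lam + μ) := by
    have h1 := hkey x
    have h2 : G x ≤ (1 + ε) * G xs := horacle
    have h3 : (lam + μ / 2) * ‖x - xs‖ ^ 2 ≤ ε * F y := by
      have h4 : ε * G xs ≤ ε * F y := mul_le_mul_of_nonneg_left hGxs_le hε.le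
      simp only [hGdef] at h1 h2 h4
      nlinarith [h4, h1, h2]
    rw [le_div_iff₀ h2lamμ]
    linarith
  have hxxs : ‖x - xs‖ ≤ Real.sqrt (2 * ε * F y / (2 * lam + μ)) := by
    rw [show ‖x - xs‖ = Real.sqrt (‖x - xs‖ ^ 2) from (Real.sqrt_sq (norm_nonneg _)).symm]
    exact Real.sqrt_le_sqrt hsq
  -- radius bound ‖xs - y‖ ≤ ‖F' y‖ / (2λ + μ)
  have hrad : ‖xs - y‖ ≤ ‖F' y‖ / (2 * lam + μ) := by
    have h1 := hsc y xs
    have h2 := hsc xs y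
    have hsym : ‖y - xs‖ = ‖xs - y‖ := norm_sub_rev _ _
    have hi : ⟪F' xs, y - xs⟫ = 2 * lam * ‖xs - y‖ ^ 2 := by
      rw [hFxs, inner_neg_left, real_inner_smul_left]
      have : ⟪xs - y, y - xs⟫ = -‖xs - y‖ ^ 2 := by
        rw [show y - xs = -(xs - y) by abel, inner_neg_right, real_inner_self_eq_norm_sq]
      rw [this]; ring
    have hcs : -⟪F' y, xs - y⟫ ≤ ‖F' y‖ * ‖xs - y‖ := by
      have := abs_real_inner_le_norm (F' y) (xs - y)
      have := neg_abs_le ⟪F' y, xs - y⟫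
      linarith [abs_real_inner_le_norm (F' y) (xs - y), neg_abs_le ⟪F' y, xs - y⟫]
    have hmain : (2 * lam + μ) * ‖xs - y‖ ^ 2 ≤ ‖F' y‖ * ‖xs - y‖ := by
      rw [hsym] at h2
      linarith
    rcases eq_or_lt_of_le (norm_nonneg (xs - y)) with h0 | h0
    · rw [← h0]
      positivity
    · have h5 : ((2 * lam + μ) * ‖xs - y‖) * ‖xs - y‖ ≤ ‖F' y‖ * ‖xs - y‖ := by
        nlinarith [hmain]
      have h6 := le_of_mul_le_mul_right h5 h0
      rw [le_div_iff₀ h2lamμ]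
      nlinarith [h6]
  constructor
  · have htri : ‖y - xs‖ ≤ ‖x - y‖ + ‖x - xs‖ := by
      have : ‖y - xs‖ ≤ ‖y - x‖ + ‖x - xs‖ := norm_sub_le_norm_sub_add_norm_sub y x xs
      rwa [norm_sub_rev y x] at this
    linarith
  · have htri : ‖x - y‖ ≤ ‖x - xs‖ + ‖xs - y‖ := norm_sub_le_norm_sub_add_norm_sub x xs y
    linarith
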